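/- Let k ∈ ℝ, ε₁ ≥ 0, let R : ℝ → (ℝⁿ →L[ℝ] ℝⁿ) be continuous with ‖R(t) − k·id‖ ≤ ε₁ for all t, and let y : ℝ → ℝⁿ be twice differentiable with y''(t) + R(t) y(t) = 0. Set V(t) = √(‖y(t)‖²·‖y'(t)‖² − ⟨y(t), y'(t)⟩²). Then at every t with V(t) > 0, the function V is differentiable and |V'(t)| ≤ ε₁·‖y(t)‖². -/

import Mathlib

open scoped InnerProductSpace
open Real

/-- If `‖R(t) − k·id‖ ≤ ε₁` and `y'' + R(t) y = 0`, then at every `t` with `V(t) > 0`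
the parallelogram area `V(t) = √(‖y‖²·‖y'‖² − ⟨y, y'⟩²)` is differentiable and
`|V'(t)| ≤ ε₁·‖y(t)‖²`. -/
theorem stmt_5 {n : ℕ} (k ε₁ : ℝ) (hε₁ : 0 ≤ ε₁)
    (R : ℝ → EuclideanSpace ℝ (Fin n) →L[ℝ] EuclideanSpace ℝ (Fin n))
    (hRcont : Continuous R)
    (hR : ∀ t, ‖R t - k • ContinuousLinearMap.id ℝ (EuclideanSpace ℝ (Fin n))‖ ≤ ε₁)
    (y y' y'' : ℝ → EuclideanSpace ℝ (Fin n))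
    (hy : ∀ t, HasDerivAt y (y' t) t) (hy' : ∀ t, HasDerivAt y' (y'' t) t)
    (hode : ∀ t, y'' t + R t (y t) = 0)
    (V : ℝ → ℝ)
    (hV : ∀ t, V t = Real.sqrt (‖y t‖ ^ 2 * ‖y' t‖ ^ 2 - ⟪y t, y' t⟫_ℝ ^ 2)) :
    ∀ t, 0 < V t → ∃ d : ℝ, HasDerivAt V d t ∧ |d| ≤ ε₁ * ‖y t‖ ^ 2 := by
  intro t ht
  set W : ℝ → ℝ := fun s => ‖y s‖ ^ 2 * ‖y' s‖ ^ 2 - ⟪y s, y' s⟫_ℝ ^ 2 with hWdef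
  have hVW : V = fun s => Real.sqrt (W s) := funext fun s => hV s
  have hWpos : 0 < W t := by
    by_contra h
    push_neg at h
    rw [hVW] at ht
    simp only at ht
    rw [Real.sqrt_eq_zero_of_nonpos h] at ht
    exact lt_irrefl 0 ht
  set a := ‖y t‖ ^ 2 with ha
  set c := ⟪y t, y' t⟫_ℝ with hc
  have hnysq : ∀ s, ‖y s‖ ^ 2 = ⟪y s, y s⟫_ℝ := fun s => (real_inner_self_eq_norm_sq _).symm
  have hnysq' : ∀ s, ‖y' s‖ ^ 2 = ⟪y' s, y' s⟫_ℝ := fun s => (real_inner_self_eq_norm_sq _).symm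
  have d1 : HasDerivAt (fun s => ‖y s‖ ^ 2) (2 * c) t := by
    have := HasDerivAt.inner ℝ (hy t) (hy t)
    simp only [← hnysq] at this
    refine this.congr_deriv ?_
    rw [real_inner_comm (y t) (y' t), ← hc]; ring
  have d2 : HasDerivAt (fun s => ‖y' s‖ ^ 2) (2 * ⟪y' t, y'' t⟫_ℝ) t := by
    have := HasDerivAt.inner ℝ (hy' t) (hy' t)
    simp only [← hnysq'] at this
    refine this.congr_deriv ?_
    rw [real_inner_comm (y' t) (y'' t)]; ring
  have d3 : HasDerivAt (fun s => ⟪y s, y' s⟫_ℝ) (‖y' t‖ ^ 2 + ⟪y t, y'' t⟫_ℝ) t := by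
    have := HasDerivAt.inner ℝ (hy t) (hy' t)
    refine this.congr_deriv ?_
    rw [hnysq']; ring
  set D := 2 * c * ‖y' t‖ ^ 2 + a * (2 * ⟪y' t, y'' t⟫_ℝ)
    - 2 * c * (‖y' t‖ ^ 2 + ⟪y t, y'' t⟫_ℝ) with hD
  have dW : HasDerivAt W D t := by
    have := ((d1.mul d2).sub ((d3.mul d3)))
    have hWeq : W = ((fun s => ‖y s‖ ^ 2) * fun s => ‖y' s‖ ^ 2) - (fun s => ⟪y s, y' s⟫_ℝ) * fun s => ⟪y s, y' s⟫_ℝ := by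
      funext s; simp [hWdef, sq]
    rw [hWeq]
    refine this.congr_deriv ?_
    rw [hD, ha, hc]; ring
  have dV : HasDerivAt V (D / (2 * Real.sqrt (W t))) t := by
    rw [hVW]
    exact dW.sqrt (ne_of_gt hWpos)
  refine ⟨_, dV, ?_⟩
  set E := (R t - k • ContinuousLinearMap.id ℝ (EuclideanSpace ℝ (Fin n))) (y t) with hE
  have hy'' : y'' t = -(k • y t) - E := by
    have h0 := hode t
    have h1 : y'' t = - R t (y t) := by linear_combination (norm := module) h0
    rw [h1, hE]
    simp only [ContinuousLinearMap.sub_apply, ContinuousLinearMap.smul_apply,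
      ContinuousLinearMap.id_apply]
    module
  have hEnorm : ‖E‖ ≤ ε₁ * ‖y t‖ := by
    calc ‖E‖ ≤ ‖R t - k • ContinuousLinearMap.id ℝ (EuclideanSpace ℝ (Fin n))‖ * ‖y t‖ :=
        ContinuousLinearMap.le_opNorm _ _
      _ ≤ ε₁ * ‖y t‖ := by gcongr; exact hR t
  set u := a • y' t - c • y t with hu
  have e1 : ⟪y' t, y'' t⟫_ℝ = -k * c - ⟪y' t, E⟫_ℝ := by
    rw [hy'', inner_sub_right, inner_neg_right, real_inner_smul_right,
      real_inner_comm (y t) (y' t), ← hc]; ring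
  have e2 : ⟪y t, y'' t⟫_ℝ = -k * a - ⟪y t, E⟫_ℝ := by
    rw [hy'', inner_sub_right, inner_neg_right, real_inner_smul_right, ← hnysq, ← ha]; ring
  have e3 : ⟪u, E⟫_ℝ = a * ⟪y' t, E⟫_ℝ - c * ⟪y t, E⟫_ℝ := by
    rw [hu, inner_sub_left, real_inner_smul_left, real_inner_smul_left]
  have hDE : D = -2 * ⟪u, E⟫_ℝ := by
    rw [hD, e1, e2, e3]; ring
  have hunorm : ‖u‖ = ‖y t‖ * Real.sqrt (W t) := by
    have h1 : ‖u‖ ^ 2 = (‖y t‖ * Real.sqrt (W t)) ^ 2 := by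
      rw [← real_inner_self_eq_norm_sq, hu]
      simp only [inner_sub_left, inner_sub_right, real_inner_smul_left, real_inner_smul_right]
      rw [real_inner_comm (y t) (y' t), ← hc, ← hnysq, ← hnysq', ← ha,
        mul_pow, Real.sq_sqrt (le_of_lt hWpos)]
      show _ = a * (a * ‖y' t‖ ^ 2 - c ^ 2)
      ring
    calc ‖u‖ = Real.sqrt (‖u‖ ^ 2) := (Real.sqrt_sq (norm_nonneg u)).symm
      _ = Real.sqrt ((‖y t‖ * Real.sqrt (W t)) ^ 2) := by rw [h1]
      _ = ‖y t‖ * Real.sqrt (W t) := Real.sqrt_sq (by positivity)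
  have hbound : |D| ≤ 2 * (ε₁ * ‖y t‖ ^ 2) * Real.sqrt (W t) := by
    rw [hDE, abs_mul]
    have h1 : |⟪u, E⟫_ℝ| ≤ ‖u‖ * ‖E‖ := abs_real_inner_le_norm u E
    calc |(-2:ℝ)| * |⟪u, E⟫_ℝ| = 2 * |⟪u, E⟫_ℝ| := by norm_num
      _ ≤ 2 * (‖u‖ * ‖E‖) := by linarith
      _ ≤ 2 * ((‖y t‖ * Real.sqrt (W t)) * (ε₁ * ‖y t‖)) := by
          rw [hunorm]; gcongr
      _ = 2 * (ε₁ * ‖y t‖ ^ 2) * Real.sqrt (W t) := by ring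
  rw [abs_div]
  have hsq : 0 < Real.sqrt (W t) := Real.sqrt_pos.mpr hWpos
  rw [div_le_iff₀ (by positivity)]
  calc |D| ≤ 2 * (ε₁ * ‖y t‖ ^ 2) * Real.sqrt (W t) := hbound
    _ = ε₁ * ‖y t‖ ^ 2 * |2 * Real.sqrt (W t)| := by
        rw [abs_of_pos (by positivity)]; ring
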